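/- arXiv:1212.6920 — 2 statements merged into one kernel-verified Lean document; each statement's English description precedes it below -/
import Mathlib

section
/- Fix k, r ∈ ℕ and ζ ∈ ℝ with |ζ| < 1. Let Ē_k^r(ζ) ⊆ M_k(ℂ)³ × M_{k×r}(ℂ) × M_{r×k}(ℂ) be the set of P²-ADHM data at level ζ, with the subspace topology. Then the continuous map ι : Ē_k^r(ζ) → Ē_k^{r+3k}(ζ) sending (a₁,a₂,d,b,c) to (a₁, a₂, d, (b 0 0 0), (c; 0; 0; 0)) — where b is extended by three k×k zero blocks of columns and c by three k×k zero blocks of rows — is null-homotopic, i.e. homotopic through continuous maps to a constant map. -/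
open Matrix

/-- The configuration space for P²-ADHM data:
`M_k(ℂ) × M_k(ℂ) × M_k(ℂ) × M_{k×r}(ℂ) × M_{r×k}(ℂ)`. -/
abbrev ConfP2 (k r : ℕ) :=
  Matrix (Fin k) (Fin k) ℂ × Matrix (Fin k) (Fin k) ℂ × Matrix (Fin k) (Fin k) ℂ ×
    Matrix (Fin k) (Fin r) ℂ × Matrix (Fin r) (Fin k) ℂ

/-- A P²-ADHM datum at level `ζ`, as a point `(a₁, a₂, d, b, c)` of `ConfP2 k r`. -/
def IsP2ADHM {k r : ℕ} (ζ : ℝ) (p : ConfP2 k r) : Prop :=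
  p.1 * p.2.2.1 * p.2.1 - p.2.1 * p.2.2.1 * p.1 + p.2.2.2.1 * p.2.2.2.2 = 0 ∧
  p.1 * p.1ᴴ + p.2.1 * p.2.1ᴴ + p.2.2.2.1 * p.2.2.2.1ᴴ = 1 ∧
  p.2.2.1 * p.1 * (p.2.2.1 * p.1)ᴴ - (p.2.2.1 * p.1)ᴴ * (p.2.2.1 * p.1)
      + p.2.2.1 * p.2.1 * (p.2.2.1 * p.2.1)ᴴ - (p.2.2.1 * p.2.1)ᴴ * (p.2.2.1 * p.2.1)
      - p.1ᴴ * p.1 - p.2.1ᴴ * p.2.1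
      + p.2.2.1 * p.2.2.2.1 * (p.2.2.1 * p.2.2.2.1)ᴴ - p.2.2.2.2ᴴ * p.2.2.2.2 + 1
    = (ζ : ℂ) • (1 : Matrix (Fin k) (Fin k) ℂ)

/-- Extend a `k × r` matrix by `m` zero columns. -/
def extendCols {k r : ℕ} (m : ℕ) (b : Matrix (Fin k) (Fin r) ℂ) :
    Matrix (Fin k) (Fin (r + m)) ℂ :=
  Matrix.of fun i j => if h : (j : ℕ) < r then b i ⟨j, h⟩ else 0

/-- Extend an `r × k` matrix by `m` zero rows. -/
def extendRows {k r : ℕ} (m : ℕ) (c : Matrix (Fin r) (Fin k) ℂ) :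
    Matrix (Fin (r + m)) (Fin k) ℂ :=
  Matrix.of fun i j => if h : (i : ℕ) < r then c ⟨i, h⟩ j else 0

/-- The rank-stabilization map
`(a₁,a₂,d,b,c) ↦ (a₁, a₂, d, (b 0 ⋯ 0), (c; 0; ⋯; 0))`. -/
def extP2 {k r : ℕ} (m : ℕ) (p : ConfP2 k r) : ConfP2 k (r + m) :=
  (p.1, p.2.1, p.2.2.1, extendCols m p.2.2.2.1, extendRows m p.2.2.2.2)

noncomputable section StabAux

variable {k r : ℕ}

/-- index equivalence splitting `Fin (r + 3k)` into four blocks -/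
def e3 (k r : ℕ) : (Fin r ⊕ (Fin k ⊕ (Fin k ⊕ Fin k))) ≃ Fin (r + 3 * k) :=
  (Equiv.sumCongr (Equiv.refl _)
    ((Equiv.sumCongr (Equiv.refl _) finSumFinEquiv).trans
      (finSumFinEquiv.trans (finCongr (by ring))))).trans finSumFinEquiv

def rowQuad (b1 : Matrix (Fin k) (Fin r) ℂ) (b2 b3 b4 : Matrix (Fin k) (Fin k) ℂ) :
    Matrix (Fin k) (Fin (r + 3 * k)) ℂ :=
  (fromCols b1 (fromCols b2 (fromCols b3 b4))).submatrix id (e3 k r).symm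

def colQuad (c1 : Matrix (Fin r) (Fin k) ℂ) (c2 c3 c4 : Matrix (Fin k) (Fin k) ℂ) :
    Matrix (Fin (r + 3 * k)) (Fin k) ℂ :=
  (fromRows c1 (fromRows c2 (fromRows c3 c4))).submatrix (e3 k r).symm id

lemma rowQuad_mul_colQuad (b1 : Matrix (Fin k) (Fin r) ℂ) (b2 b3 b4 : Matrix (Fin k) (Fin k) ℂ)
    (c1 : Matrix (Fin r) (Fin k) ℂ) (c2 c3 c4 : Matrix (Fin k) (Fin k) ℂ) :
    rowQuad b1 b2 b3 b4 * colQuad c1 c2 c3 c4 = b1 * c1 + b2 * c2 + b3 * c3 + b4 * c4 := by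
  unfold rowQuad colQuad
  rw [show ((e3 k r).symm : Fin (r+3*k) → _) = ((e3 k r).symm : _ ≃ _) from rfl]
  rw [Matrix.submatrix_mul_equiv]
  rw [fromCols_mul_fromRows, fromCols_mul_fromRows, fromCols_mul_fromRows]
  ext i j
  simp [Matrix.add_apply, add_assoc]

lemma conjTranspose_rowQuad (b1 : Matrix (Fin k) (Fin r) ℂ) (b2 b3 b4 : Matrix (Fin k) (Fin k) ℂ) :
    (rowQuad b1 b2 b3 b4)ᴴ = colQuad b1ᴴ b2ᴴ b3ᴴ b4ᴴ := by
  unfold rowQuad colQuad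
  rw [Matrix.conjTranspose_submatrix, conjTranspose_fromCols_eq_fromRows_conjTranspose,
    conjTranspose_fromCols_eq_fromRows_conjTranspose,
    conjTranspose_fromCols_eq_fromRows_conjTranspose]

lemma conjTranspose_colQuad (c1 : Matrix (Fin r) (Fin k) ℂ) (c2 c3 c4 : Matrix (Fin k) (Fin k) ℂ) :
    (colQuad c1 c2 c3 c4)ᴴ = rowQuad c1ᴴ c2ᴴ c3ᴴ c4ᴴ := by
  unfold rowQuad colQuad
  rw [Matrix.conjTranspose_submatrix, conjTranspose_fromRows_eq_fromCols_conjTranspose,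
    conjTranspose_fromRows_eq_fromCols_conjTranspose,
    conjTranspose_fromRows_eq_fromCols_conjTranspose]

lemma mul_submatrix_id {n m p : Type*} [Fintype m] (M : Matrix (Fin k) m ℂ)
    (N : Matrix m n ℂ) (f : p → n) :
    M * N.submatrix id f = (M * N).submatrix id f := by
  ext i j
  simp [Matrix.mul_apply]

lemma mul_rowQuad (M : Matrix (Fin k) (Fin k) ℂ) (b1 : Matrix (Fin k) (Fin r) ℂ)
    (b2 b3 b4 : Matrix (Fin k) (Fin k) ℂ) :
    M * rowQuad b1 b2 b3 b4 = rowQuad (M * b1) (M * b2) (M * b3) (M * b4) := by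
  unfold rowQuad
  rw [mul_submatrix_id, mul_fromCols, mul_fromCols, mul_fromCols]

lemma extendCols_eq_rowQuad (b : Matrix (Fin k) (Fin r) ℂ) :
    extendCols (3 * k) b = rowQuad b 0 0 0 := by
  ext i j
  unfold extendCols rowQuad
  by_cases h : (j : ℕ) < r
  · have he : (e3 k r).symm j = Sum.inl ⟨j, h⟩ := by
      rw [Equiv.symm_apply_eq]
      apply Fin.ext
      simp [e3, finSumFinEquiv_apply_left]
    simp [he, h]
  · rcases h' : (e3 k r).symm j with x | y
    · exfalso
      have : j = e3 k r (Sum.inl x) := by rw [← h', Equiv.apply_symm_apply]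
      have hv : (j : ℕ) = (x : ℕ) := by
        rw [this]; simp [e3, finSumFinEquiv_apply_left]
      exact h (hv ▸ x.isLt)
    · simp only [Matrix.of_apply, Matrix.submatrix_apply, h', dif_neg h, id_eq]
      rcases y with y | y | y <;> simp

lemma extendRows_eq_colQuad (c : Matrix (Fin r) (Fin k) ℂ) :
    extendRows (3 * k) c = colQuad c 0 0 0 := by
  ext i j
  unfold extendRows colQuad
  by_cases h : (i : ℕ) < r
  · have he : (e3 k r).symm i = Sum.inl ⟨i, h⟩ := by
      rw [Equiv.symm_apply_eq]
      apply Fin.ext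
      simp [e3, finSumFinEquiv_apply_left]
    simp [he, h]
  · rcases h' : (e3 k r).symm i with x | y
    · exfalso
      have : i = e3 k r (Sum.inl x) := by rw [← h', Equiv.apply_symm_apply]
      have hv : (i : ℕ) = (x : ℕ) := by
        rw [this]; simp [e3, finSumFinEquiv_apply_left]
      exact h (hv ▸ x.isLt)
    · simp only [Matrix.of_apply, Matrix.submatrix_apply, h', dif_neg h, id_eq]
      rcases y with y | y | y <;> simp

end StabAux

noncomputable section

variable {k r : ℕ}

/-- the stage-A family of configurations -/
def ptA (ζ σ ρ : ℝ) (p : ConfP2 k r) : ConfP2 k (r + 3 * k) :=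
  ((σ : ℂ) • p.1, (σ : ℂ) • p.2.1, p.2.2.1,
    rowQuad ((σ : ℂ) • p.2.2.2.1) ((ρ : ℂ) • 1) 0 0,
    colQuad ((σ : ℂ) • p.2.2.2.2) 0 (((ρ * Real.sqrt (1 - ζ) : ℝ) : ℂ) • 1)
      ((ρ : ℂ) • p.2.2.1ᴴ))

lemma isP2ADHM_ptA {ζ : ℝ} (hw : 0 ≤ 1 - ζ) (σ ρ : ℝ) (h1 : σ ^ 2 + ρ ^ 2 = 1)
    (p : ConfP2 k r) (hp : IsP2ADHM ζ p) : IsP2ADHM ζ (ptA ζ σ ρ p) := by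
  obtain ⟨a1, a2, d, b, c⟩ := p
  obtain ⟨hp1, hp2, hp3⟩ := hp
  simp only [IsP2ADHM, ptA] at *
  have h1c : (σ : ℂ) * σ + (ρ : ℂ) * ρ = 1 := by
    norm_cast; linear_combination h1
  have hsq : Real.sqrt (1 - ζ) * Real.sqrt (1 - ζ) = 1 - ζ := Real.mul_self_sqrt hw
  refine ⟨?_, ?_, ?_⟩
  · calc ((σ:ℂ) • a1) * d * ((σ:ℂ) • a2) - ((σ:ℂ) • a2) * d * ((σ:ℂ) • a1)
        + rowQuad ((σ : ℂ) • b) ((ρ : ℂ) • 1) 0 0 *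
          colQuad ((σ : ℂ) • c) 0 (((ρ * Real.sqrt (1 - ζ) : ℝ) : ℂ) • 1) ((ρ : ℂ) • dᴴ)
        = ((σ:ℂ) * σ) • (a1 * d * a2 - a2 * d * a1 + b * c) := by
          rw [rowQuad_mul_colQuad]
          simp only [smul_mul_assoc, mul_smul_comm, Matrix.smul_mul, Matrix.mul_smul,
            smul_smul, Matrix.zero_mul,
            Matrix.mul_zero, smul_zero, add_zero, zero_add, Matrix.one_mul]
          module
    _ = 0 := by rw [hp1, smul_zero]
  · calc ((σ:ℂ) • a1) * ((σ:ℂ) • a1)ᴴ + ((σ:ℂ) • a2) * ((σ:ℂ) • a2)ᴴ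
        + rowQuad ((σ : ℂ) • b) ((ρ : ℂ) • 1) 0 0 * (rowQuad ((σ : ℂ) • b) ((ρ : ℂ) • 1) 0 0)ᴴ
        = ((σ:ℂ) * σ) • (a1 * a1ᴴ + a2 * a2ᴴ + b * bᴴ) + ((ρ:ℂ) * ρ) • 1 := by
          rw [conjTranspose_rowQuad, rowQuad_mul_colQuad]
          simp only [Matrix.conjTranspose_smul, Complex.star_def, Complex.conj_ofReal,
            Matrix.conjTranspose_one, Matrix.conjTranspose_zero,
            smul_mul_assoc, mul_smul_comm, Matrix.smul_mul, Matrix.mul_smul,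
            smul_smul, Matrix.zero_mul, Matrix.mul_zero, smul_zero, add_zero, zero_add,
            Matrix.one_mul, Matrix.mul_one]
          module
    _ = 1 := by rw [hp2, ← add_smul, h1c, one_smul]
  · have hsqc : (Real.sqrt (1 - ζ) : ℂ) * (Real.sqrt (1 - ζ) : ℂ) = 1 - (ζ:ℂ) := by
      exact_mod_cast congrArg (fun x : ℝ => (x : ℂ)) hsq
    calc d * ((σ:ℂ) • a1) * (d * ((σ:ℂ) • a1))ᴴ - (d * ((σ:ℂ) • a1))ᴴ * (d * ((σ:ℂ) • a1))
        + d * ((σ:ℂ) • a2) * (d * ((σ:ℂ) • a2))ᴴ - (d * ((σ:ℂ) • a2))ᴴ * (d * ((σ:ℂ) • a2))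
        - ((σ:ℂ) • a1)ᴴ * ((σ:ℂ) • a1) - ((σ:ℂ) • a2)ᴴ * ((σ:ℂ) • a2)
        + d * rowQuad ((σ : ℂ) • b) ((ρ : ℂ) • 1) 0 0
            * (d * rowQuad ((σ : ℂ) • b) ((ρ : ℂ) • 1) 0 0)ᴴ
        - (colQuad ((σ : ℂ) • c) 0 (((ρ * Real.sqrt (1 - ζ) : ℝ) : ℂ) • 1) ((ρ : ℂ) • dᴴ))ᴴ
            * colQuad ((σ : ℂ) • c) 0 (((ρ * Real.sqrt (1 - ζ) : ℝ) : ℂ) • 1) ((ρ : ℂ) • dᴴ) + 1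
        = ((σ:ℂ) * σ) • (d * a1 * (d * a1)ᴴ - (d * a1)ᴴ * (d * a1)
            + d * a2 * (d * a2)ᴴ - (d * a2)ᴴ * (d * a2) - a1ᴴ * a1 - a2ᴴ * a2
            + d * b * (d * b)ᴴ - cᴴ * c + 1)
          + ((1:ℂ) - (σ:ℂ) * σ - ((ρ * Real.sqrt (1 - ζ) : ℝ) : ℂ) * ((ρ * Real.sqrt (1 - ζ) : ℝ) : ℂ)) • 1 := by
          rw [mul_rowQuad, conjTranspose_rowQuad, rowQuad_mul_colQuad,
            conjTranspose_colQuad, rowQuad_mul_colQuad]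
          simp only [Matrix.conjTranspose_smul, Complex.star_def, Complex.conj_ofReal,
            Matrix.conjTranspose_one, Matrix.conjTranspose_zero, Matrix.conjTranspose_mul,
            Matrix.conjTranspose_conjTranspose,
            smul_mul_assoc, mul_smul_comm, Matrix.smul_mul, Matrix.mul_smul,
            smul_smul, Matrix.zero_mul, Matrix.mul_zero, smul_zero, add_zero, zero_add,
            Matrix.one_mul, Matrix.mul_one, Matrix.mul_assoc]
          module
    _ = (ζ : ℂ) • 1 := by
          rw [hp3, smul_smul, ← add_smul]
          have hs : (σ:ℂ) * σ * ζ + ((1:ℂ) - (σ:ℂ) * σ - ((ρ * Real.sqrt (1 - ζ) : ℝ) : ℂ) * ((ρ * Real.sqrt (1 - ζ) : ℝ) : ℂ)) = (ζ:ℂ) := by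
            push_cast
            linear_combination ((ζ:ℂ) - 1) * h1c - ((ρ:ℂ) * ρ) * hsqc
          rw [hs]


/-- the stage-B family of configurations -/
def ptB (ζ : ℝ) (e : Matrix (Fin k) (Fin k) ℂ) : ConfP2 k (r + 3 * k) :=
  (0, 0, e, rowQuad 0 1 0 0,
    colQuad 0 0 ((Real.sqrt (1 - ζ) : ℂ) • 1) eᴴ)

lemma isP2ADHM_ptB {ζ : ℝ} (hw : 0 ≤ 1 - ζ) (e : Matrix (Fin k) (Fin k) ℂ) :
    IsP2ADHM ζ (ptB (r := r) ζ e) := by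
  have hsqc : (Real.sqrt (1 - ζ) : ℂ) * (Real.sqrt (1 - ζ) : ℂ) = 1 - (ζ:ℂ) := by
    exact_mod_cast congrArg (fun x : ℝ => (x : ℂ)) (Real.mul_self_sqrt hw)
  simp only [IsP2ADHM, ptB]
  refine ⟨?_, ?_, ?_⟩
  · rw [rowQuad_mul_colQuad]
    simp
  · rw [conjTranspose_rowQuad, rowQuad_mul_colQuad]
    simp
  · rw [show ((ζ:ℂ)) = (1:ℂ) - (Real.sqrt (1 - ζ) : ℂ) * (Real.sqrt (1 - ζ) : ℂ) from by
      rw [hsqc]; ring]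
    rw [mul_rowQuad, conjTranspose_rowQuad, rowQuad_mul_colQuad,
      conjTranspose_colQuad, rowQuad_mul_colQuad]
    simp only [Matrix.conjTranspose_smul, Complex.star_def, Complex.conj_ofReal,
      Matrix.conjTranspose_one, Matrix.conjTranspose_zero, Matrix.conjTranspose_mul,
      Matrix.conjTranspose_conjTranspose,
      smul_mul_assoc, mul_smul_comm, Matrix.smul_mul, Matrix.mul_smul,
      smul_smul, Matrix.zero_mul, Matrix.mul_zero, smul_zero, add_zero, zero_add,
      Matrix.one_mul, Matrix.mul_one, Matrix.mul_assoc]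
    module

lemma ptA_one {ζ : ℝ} (p : ConfP2 k r) : ptA ζ 1 0 p = extP2 (3 * k) p := by
  obtain ⟨a1, a2, d, b, c⟩ := p
  simp [ptA, extP2, extendCols_eq_rowQuad, extendRows_eq_colQuad]

lemma ptA_zero {ζ : ℝ} (p : ConfP2 k r) : ptA ζ 0 1 p = ptB ζ p.2.2.1 := by
  obtain ⟨a1, a2, d, b, c⟩ := p
  simp [ptA, ptB]

section Cont
variable {X : Type*} [TopologicalSpace X]

lemma continuous_rowQuad4 {f1 : X → Matrix (Fin k) (Fin r) ℂ}
    {f2 f3 f4 : X → Matrix (Fin k) (Fin k) ℂ} (h1 : Continuous f1) (h2 : Continuous f2)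
    (h3 : Continuous f3) (h4 : Continuous f4) :
    Continuous fun x => rowQuad (f1 x) (f2 x) (f3 x) (f4 x) := by
  apply continuous_matrix
  intro i j
  simp only [rowQuad, Matrix.submatrix_apply, id]
  cases hx : (e3 k r).symm j with
  | inl x => simpa using h1.matrix_elem i x
  | inr x =>
    cases x with
    | inl x => simpa using h2.matrix_elem i x
    | inr x =>
      cases x with
      | inl x => simpa using h3.matrix_elem i x
      | inr x => simpa using h4.matrix_elem i x

lemma continuous_colQuad4 {f1 : X → Matrix (Fin r) (Fin k) ℂ}
    {f2 f3 f4 : X → Matrix (Fin k) (Fin k) ℂ} (h1 : Continuous f1) (h2 : Continuous f2)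
    (h3 : Continuous f3) (h4 : Continuous f4) :
    Continuous fun x => colQuad (f1 x) (f2 x) (f3 x) (f4 x) := by
  apply continuous_matrix
  intro i j
  simp only [colQuad, Matrix.submatrix_apply, id]
  cases hx : (e3 k r).symm i with
  | inl x => simpa using h1.matrix_elem x j
  | inr x =>
    cases x with
    | inl x => simpa using h2.matrix_elem x j
    | inr x =>
      cases x with
      | inl x => simpa using h3.matrix_elem x j
      | inr x => simpa using h4.matrix_elem x j

end Cont

def sigf (t : ℝ) : ℝ := (1 - t ^ 2) / (1 + t ^ 2)
def rhof (t : ℝ) : ℝ := 2 * t / (1 + t ^ 2)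

lemma den_ne (t : ℝ) : (1 + t ^ 2) ≠ 0 := by positivity

lemma sigf_rhof_sq (t : ℝ) : sigf t ^ 2 + rhof t ^ 2 = 1 := by
  unfold sigf rhof
  field_simp
  ring

lemma sigf_zero : sigf 0 = 1 := by norm_num [sigf]
lemma rhof_zero : rhof 0 = 0 := by norm_num [rhof]
lemma sigf_one : sigf 1 = 0 := by norm_num [sigf]
lemma rhof_one : rhof 1 = 1 := by norm_num [rhof]

lemma continuous_sigf : Continuous sigf :=
  (continuous_const.sub (continuous_pow 2)).div
    (continuous_const.add (continuous_pow 2)) den_ne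

lemma continuous_rhof : Continuous rhof :=
  (continuous_const.mul continuous_id).div
    (continuous_const.add (continuous_pow 2)) den_ne

section ContFam
variable {X : Type*} [TopologicalSpace X]

lemma continuous_ofReal_comp {g : X → ℝ} (hg : Continuous g) :
    Continuous fun x => ((g x : ℝ) : ℂ) := Complex.continuous_ofReal.comp hg

lemma continuous_ptA_family (ζ : ℝ) {s t : X → ℝ} {P : X → ConfP2 k r}
    (hs : Continuous s) (ht : Continuous t) (hP : Continuous P) :
    Continuous fun x => ptA ζ (s x) (t x) (P x) := by
  unfold ptA
  refine Continuous.prodMk ?_ (Continuous.prodMk ?_ (Continuous.prodMk ?_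
    (Continuous.prodMk ?_ ?_)))
  · exact (continuous_ofReal_comp hs).smul hP.fst
  · exact (continuous_ofReal_comp hs).smul hP.snd.fst
  · exact hP.snd.snd.fst
  · exact continuous_rowQuad4 ((continuous_ofReal_comp hs).smul hP.snd.snd.snd.fst)
      ((continuous_ofReal_comp ht).smul continuous_const) continuous_const continuous_const
  · exact continuous_colQuad4 ((continuous_ofReal_comp hs).smul hP.snd.snd.snd.snd)
      continuous_const
      ((continuous_ofReal_comp (ht.mul continuous_const)).smul continuous_const)
      ((continuous_ofReal_comp ht).smul hP.snd.snd.fst.matrix_conjTranspose)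

lemma continuous_ptB_family (ζ : ℝ) {E : X → Matrix (Fin k) (Fin k) ℂ}
    (hE : Continuous E) :
    Continuous fun x => (ptB ζ (E x) : ConfP2 k (r + 3 * k)) := by
  unfold ptB
  refine Continuous.prodMk continuous_const (Continuous.prodMk continuous_const
    (Continuous.prodMk hE (Continuous.prodMk continuous_const ?_)))
  exact continuous_colQuad4 continuous_const continuous_const continuous_const
    hE.matrix_conjTranspose

end ContFam


/-- For `|ζ| < 1`, the inclusion `Ē_k^r(ζ) → Ē_k^{r+3k}(ζ)`,
`(a₁,a₂,d,b,c) ↦ (a₁,a₂,d,(b 0 0 0),(c;0;0;0))`, of the spaces of P²-ADHM data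
at level `ζ` is a well-defined continuous map and is null-homotopic. -/
theorem stmt15 (k r : ℕ) (ζ : ℝ) (hζ : |ζ| < 1) :
    ∃ f : C({p : ConfP2 k r // IsP2ADHM ζ p}, {p : ConfP2 k (r + 3 * k) // IsP2ADHM ζ p}),
      (∀ p, (f p : ConfP2 k (r + 3 * k)) = extP2 (3 * k) (p : ConfP2 k r)) ∧
      ∃ q, f.Homotopic (ContinuousMap.const _ q) := by
  have hw : 0 ≤ 1 - ζ := by
    have h := abs_lt.mp hζ
    linarith [h.2]
  set E := {p : ConfP2 k r // IsP2ADHM ζ p}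
  set E' := {p : ConfP2 k (r + 3 * k) // IsP2ADHM ζ p}
  have memA : ∀ (σ ρ : ℝ), σ ^ 2 + ρ ^ 2 = 1 → ∀ p : E, IsP2ADHM ζ (ptA ζ σ ρ p.1) :=
    fun σ ρ h p => isP2ADHM_ptA hw σ ρ h p.1 p.2
  have hf : Continuous fun p : E => (⟨extP2 (3 * k) p.1, by
      rw [← ptA_one (ζ := ζ)]; exact memA 1 0 (by norm_num) p⟩ : E') := by
    apply Continuous.subtype_mk
    have : (fun p : E => extP2 (3 * k) p.1) = fun p : E => ptA ζ 1 0 p.1 := by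
      funext p; rw [ptA_one]
    rw [this]
    exact continuous_ptA_family ζ continuous_const continuous_const continuous_subtype_val
  set fmap : C(E, E') := ⟨_, hf⟩ with hfdef
  refine ⟨fmap, fun p => rfl, ?_⟩
  · -- the null-homotopy
    refine ⟨⟨ptB ζ 0, isP2ADHM_ptB hw 0⟩, ?_⟩
    have hg : Continuous fun p : E => (⟨ptB ζ p.1.2.2.1, isP2ADHM_ptB hw _⟩ : E') := by
      apply Continuous.subtype_mk
      exact continuous_ptB_family ζ continuous_subtype_val.snd.snd.fst
    set g : C(E, E') := ⟨fun p => ⟨ptB ζ p.1.2.2.1, isP2ADHM_ptB hw _⟩, hg⟩ with hgdef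
    have h1 : fmap.Homotopic g := by
      refine ⟨{
        toFun := fun q => ⟨ptA ζ (sigf q.1) (rhof q.1) q.2.1,
          memA _ _ (sigf_rhof_sq _) q.2⟩
        continuous_toFun := by
          apply Continuous.subtype_mk
          exact continuous_ptA_family ζ
            (continuous_sigf.comp (continuous_subtype_val.comp continuous_fst))
            (continuous_rhof.comp (continuous_subtype_val.comp continuous_fst))
            (continuous_subtype_val.comp continuous_snd)
        map_zero_left := fun p => by
          apply Subtype.ext
          show ptA ζ (sigf ((0 : unitInterval) : ℝ)) (rhof ((0 : unitInterval) : ℝ)) p.1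
            = extP2 (3 * k) p.1
          rw [show ((0 : unitInterval) : ℝ) = 0 from rfl, sigf_zero, rhof_zero, ptA_one]
        map_one_left := fun p => by
          apply Subtype.ext
          show ptA ζ (sigf ((1 : unitInterval) : ℝ)) (rhof ((1 : unitInterval) : ℝ)) p.1
            = ptB ζ p.1.2.2.1
          rw [show ((1 : unitInterval) : ℝ) = 1 from rfl, sigf_one, rhof_one, ptA_zero] }⟩
    have h2 : g.Homotopic (ContinuousMap.const E ⟨ptB ζ 0, isP2ADHM_ptB hw 0⟩) := by
      refine ⟨{
        toFun := fun q => ⟨ptB ζ ((1 - (q.1 : ℝ)) • q.2.1.2.2.1), isP2ADHM_ptB hw _⟩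
        continuous_toFun := by
          apply Continuous.subtype_mk
          apply continuous_ptB_family
          exact ((continuous_const.sub
            (continuous_subtype_val.comp continuous_fst))).smul
            ((continuous_subtype_val.comp continuous_snd).snd.snd.fst)
        map_zero_left := fun p => by
          apply Subtype.ext
          show (ptB ζ ((1 - ((0 : unitInterval) : ℝ)) • p.1.2.2.1) : ConfP2 k (r + 3 * k))
            = ptB ζ p.1.2.2.1
          norm_num
        map_one_left := fun p => by
          apply Subtype.ext
          show (ptB ζ ((1 - ((1 : unitInterval) : ℝ)) • p.1.2.2.1) : ConfP2 k (r + 3 * k))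
            = ptB ζ 0
          norm_num }⟩
    exact h1.trans h2
end
end

section
/- Fix k, r ∈ ℕ and ζ ∈ ℝ with |ζ| < 1. Let E_k^r(ζ) be the set of P²-ADHM data (a₁,a₂,d,b,c) at level ζ which moreover satisfy the non-degeneracy conditions C1' and C2', with the subspace topology. Then the continuous map ι : E_k^r(ζ) → E_k^{r+3k}(ζ) sending (a₁,a₂,d,b,c) to (a₁, a₂, d, (b 0 0 0), (c; 0; 0; 0)) — where b is extended by three k×k zero blocks of columns and c by three k×k zero blocks of rows — is null-homotopic, i.e. homotopic through continuous maps to a constant map. -/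
open Matrix

/-- The non-degeneracy conditions C1' and C2' for a P²-ADHM configuration
`(a₁,a₂,d,b,c)`, viewed through the linear maps `a₁, a₂ : W₁ → W₀`,
`d : W₀ → W₁`, `b : ℂʳ → W₀`, `c : W₁ → ℂʳ` with `W₀ = W₁ = ℂᵏ`:
C1' — there are no subspaces `V₀' ⊊ W₀`, `V₁' ⊆ W₁` with `dim V₀' = dim V₁'`,
`range b ⊆ V₀'`, `d(V₀') ⊆ V₁'`, `aᵢ(V₁') ⊆ V₀'`;
C2' — there are no subspaces `V₀ ⊆ W₀`, `0 ≠ V₁ ⊆ W₁` with `dim V₀ = dim V₁`,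
`V₁ ⊆ ker c`, `d(V₀) ⊆ V₁`, `aᵢ(V₁) ⊆ V₀`. -/
def P2NonDeg {k r : ℕ} (p : ConfP2 k r) : Prop :=
  (¬ ∃ (V₀' V₁' : Submodule ℂ (Fin k → ℂ)),
      V₀' ≠ ⊤ ∧
      Module.finrank ℂ V₀' = Module.finrank ℂ V₁' ∧
      LinearMap.range p.2.2.2.1.mulVecLin ≤ V₀' ∧
      V₀'.map p.2.2.1.mulVecLin ≤ V₁' ∧
      V₁'.map p.1.mulVecLin ≤ V₀' ∧
      V₁'.map p.2.1.mulVecLin ≤ V₀') ∧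
  (¬ ∃ (V₀ V₁ : Submodule ℂ (Fin k → ℂ)),
      V₁ ≠ ⊥ ∧
      Module.finrank ℂ V₀ = Module.finrank ℂ V₁ ∧
      V₁ ≤ LinearMap.ker p.2.2.2.2.mulVecLin ∧
      V₀.map p.2.2.1.mulVecLin ≤ V₁ ∧
      V₁.map p.1.mulVecLin ≤ V₀ ∧
      V₁.map p.2.1.mulVecLin ≤ V₀)

namespace St16
variable {k r : ℕ}

/-- Column-blocked `k × (r+3k)` matrix. -/
def Bm (P : Matrix (Fin k) (Fin r) ℂ) (z₁ z₂ z₃ : Matrix (Fin k) (Fin k) ℂ) :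
    Matrix (Fin k) (Fin (r + 3 * k)) ℂ :=
  Matrix.of fun i j =>
    if h : (j : ℕ) < r then P i ⟨j, h⟩
    else if h1 : (j : ℕ) < r + k then z₁ i ⟨(j : ℕ) - r, by omega⟩
    else if h2 : (j : ℕ) < r + 2 * k then z₂ i ⟨(j : ℕ) - (r + k), by omega⟩
    else z₃ i ⟨(j : ℕ) - (r + 2 * k), by omega⟩

/-- Row-blocked `(r+3k) × k` matrix. -/
def Cm (Q : Matrix (Fin r) (Fin k) ℂ) (w₁ w₂ w₃ : Matrix (Fin k) (Fin k) ℂ) :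
    Matrix (Fin (r + 3 * k)) (Fin k) ℂ :=
  Matrix.of fun j i =>
    if h : (j : ℕ) < r then Q ⟨j, h⟩ i
    else if h1 : (j : ℕ) < r + k then w₁ ⟨(j : ℕ) - r, by omega⟩ i
    else if h2 : (j : ℕ) < r + 2 * k then w₂ ⟨(j : ℕ) - (r + k), by omega⟩ i
    else w₃ ⟨(j : ℕ) - (r + 2 * k), by omega⟩ i

/-- Blocked vector of length `r+3k`. -/
def Vm (v₀ : Fin r → ℂ) (v₁ v₂ v₃ : Fin k → ℂ) : Fin (r + 3 * k) → ℂ :=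
  fun j =>
    if h : (j : ℕ) < r then v₀ ⟨j, h⟩
    else if h1 : (j : ℕ) < r + k then v₁ ⟨(j : ℕ) - r, by omega⟩
    else if h2 : (j : ℕ) < r + 2 * k then v₂ ⟨(j : ℕ) - (r + k), by omega⟩
    else v₃ ⟨(j : ℕ) - (r + 2 * k), by omega⟩

variable {P : Matrix (Fin k) (Fin r) ℂ} {z₁ z₂ z₃ : Matrix (Fin k) (Fin k) ℂ}
variable {Q : Matrix (Fin r) (Fin k) ℂ} {w₁ w₂ w₃ : Matrix (Fin k) (Fin k) ℂ}
variable {v₀ : Fin r → ℂ} {v₁ v₂ v₃ : Fin k → ℂ}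

@[simp] lemma Bm_app0 (i : Fin k) (j : Fin r) (H : (j:ℕ) < r + 3 * k) :
    Bm P z₁ z₂ z₃ i ⟨j, H⟩ = P i j := by
  simp only [Bm, Matrix.of_apply]; rw [dif_pos j.isLt]

@[simp] lemma Bm_app1 (i : Fin k) (j : Fin k) (H : r + (j:ℕ) < r + 3 * k) :
    Bm P z₁ z₂ z₃ i ⟨r + j, H⟩ = z₁ i j := by
  simp only [Bm, Matrix.of_apply]
  rw [dif_neg (by omega), dif_pos (by omega : r + (j:ℕ) < r + k)]
  congr 1; exact Fin.ext (by simp)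

@[simp] lemma Bm_app2 (i : Fin k) (j : Fin k) (H : r + k + (j:ℕ) < r + 3 * k) :
    Bm P z₁ z₂ z₃ i ⟨r + k + j, H⟩ = z₂ i j := by
  simp only [Bm, Matrix.of_apply]
  rw [dif_neg (by omega), dif_neg (by omega), dif_pos (by omega : r + k + (j:ℕ) < r + 2 * k)]
  congr 1; exact Fin.ext (by simp)

@[simp] lemma Bm_app3 (i : Fin k) (j : Fin k) (H : r + 2 * k + (j:ℕ) < r + 3 * k) :
    Bm P z₁ z₂ z₃ i ⟨r + 2 * k + j, H⟩ = z₃ i j := by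
  simp only [Bm, Matrix.of_apply]
  rw [dif_neg (by omega), dif_neg (by omega), dif_neg (by omega)]
  congr 1; exact Fin.ext (by simp)

@[simp] lemma Cm_app0 (i : Fin k) (j : Fin r) (H : (j:ℕ) < r + 3 * k) :
    Cm Q w₁ w₂ w₃ ⟨j, H⟩ i = Q j i := by
  simp only [Cm, Matrix.of_apply]; rw [dif_pos j.isLt]

@[simp] lemma Cm_app1 (i : Fin k) (j : Fin k) (H : r + (j:ℕ) < r + 3 * k) :
    Cm Q w₁ w₂ w₃ ⟨r + j, H⟩ i = w₁ j i := by
  simp only [Cm, Matrix.of_apply]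
  rw [dif_neg (by omega), dif_pos (by omega : r + (j:ℕ) < r + k)]
  have : (⟨r + (j:ℕ) - r, by omega⟩ : Fin k) = j := Fin.ext (by simp)
  rw [this]

@[simp] lemma Cm_app2 (i : Fin k) (j : Fin k) (H : r + k + (j:ℕ) < r + 3 * k) :
    Cm Q w₁ w₂ w₃ ⟨r + k + j, H⟩ i = w₂ j i := by
  simp only [Cm, Matrix.of_apply]
  rw [dif_neg (by omega), dif_neg (by omega), dif_pos (by omega : r + k + (j:ℕ) < r + 2 * k)]
  have : (⟨r + k + (j:ℕ) - (r + k), by omega⟩ : Fin k) = j := Fin.ext (by simp)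
  rw [this]

@[simp] lemma Cm_app3 (i : Fin k) (j : Fin k) (H : r + 2 * k + (j:ℕ) < r + 3 * k) :
    Cm Q w₁ w₂ w₃ ⟨r + 2 * k + j, H⟩ i = w₃ j i := by
  simp only [Cm, Matrix.of_apply]
  rw [dif_neg (by omega), dif_neg (by omega), dif_neg (by omega)]
  have : (⟨r + 2 * k + (j:ℕ) - (r + 2 * k), by omega⟩ : Fin k) = j := Fin.ext (by simp)
  rw [this]

@[simp] lemma Vm_app0 (j : Fin r) (H : (j:ℕ) < r + 3 * k) :
    Vm v₀ v₁ v₂ v₃ ⟨j, H⟩ = v₀ j := by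
  simp only [Vm]; rw [dif_pos j.isLt]

@[simp] lemma Vm_app1 (j : Fin k) (H : r + (j:ℕ) < r + 3 * k) :
    Vm v₀ v₁ v₂ v₃ ⟨r + j, H⟩ = v₁ j := by
  simp only [Vm]
  rw [dif_neg (by omega), dif_pos (by omega : r + (j:ℕ) < r + k)]
  congr 1; exact Fin.ext (by simp)

@[simp] lemma Vm_app2 (j : Fin k) (H : r + k + (j:ℕ) < r + 3 * k) :
    Vm v₀ v₁ v₂ v₃ ⟨r + k + j, H⟩ = v₂ j := by
  simp only [Vm]
  rw [dif_neg (by omega), dif_neg (by omega), dif_pos (by omega : r + k + (j:ℕ) < r + 2 * k)]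
  congr 1; exact Fin.ext (by simp)

@[simp] lemma Vm_app3 (j : Fin k) (H : r + 2 * k + (j:ℕ) < r + 3 * k) :
    Vm v₀ v₁ v₂ v₃ ⟨r + 2 * k + j, H⟩ = v₃ j := by
  simp only [Vm]
  rw [dif_neg (by omega), dif_neg (by omega), dif_neg (by omega)]
  congr 1; exact Fin.ext (by simp)

lemma sum_split {M : Type*} [AddCommMonoid M] {m n N : ℕ} (h : m + n = N) (f : Fin N → M) :
    ∑ j, f j = (∑ j : Fin m, f ⟨j, by omega⟩) + ∑ j : Fin n, f ⟨m + (j : ℕ), by omega⟩ := by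
  subst h
  rw [Fin.sum_univ_add]
  rfl

lemma sum4 {M : Type*} [AddCommMonoid M] (f : Fin (r + 3 * k) → M) :
    ∑ j, f j = (∑ j : Fin r, f ⟨j, by omega⟩) + (∑ j : Fin k, f ⟨r + j, by omega⟩)
      + (∑ j : Fin k, f ⟨r + k + j, by omega⟩) + ∑ j : Fin k, f ⟨r + 2 * k + (j : ℕ), by omega⟩ := by
  rw [sum_split (show (r + 2 * k) + k = r + 3 * k by ring) f,
    sum_split (show (r + k) + k = r + 2 * k by ring)
      (fun j : Fin (r + 2 * k) => f ⟨j, by omega⟩),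
    sum_split (show r + k = r + k from rfl) (fun j : Fin (r + k) => f ⟨j, by omega⟩)]


lemma Bm_mul_Cm (P : Matrix (Fin k) (Fin r) ℂ) (z₁ z₂ z₃ : Matrix (Fin k) (Fin k) ℂ)
    (Q : Matrix (Fin r) (Fin k) ℂ) (w₁ w₂ w₃ : Matrix (Fin k) (Fin k) ℂ) :
    Bm P z₁ z₂ z₃ * Cm Q w₁ w₂ w₃ = P * Q + z₁ * w₁ + z₂ * w₂ + z₃ * w₃ := by
  ext i l
  rw [Matrix.mul_apply, sum4 (fun j => Bm P z₁ z₂ z₃ i j * Cm Q w₁ w₂ w₃ j l)]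
  simp [Matrix.mul_apply]

lemma Bm_ct (P : Matrix (Fin k) (Fin r) ℂ) (z₁ z₂ z₃ : Matrix (Fin k) (Fin k) ℂ) :
    (Bm P z₁ z₂ z₃)ᴴ = Cm Pᴴ z₁ᴴ z₂ᴴ z₃ᴴ := by
  ext j i
  simp only [conjTranspose_apply, Bm, Cm, Matrix.of_apply]
  split_ifs <;> simp [conjTranspose_apply]

lemma Cm_ct (Q : Matrix (Fin r) (Fin k) ℂ) (w₁ w₂ w₃ : Matrix (Fin k) (Fin k) ℂ) :
    (Cm Q w₁ w₂ w₃)ᴴ = Bm Qᴴ w₁ᴴ w₂ᴴ w₃ᴴ := by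
  ext i j
  simp only [conjTranspose_apply, Bm, Cm, Matrix.of_apply]
  split_ifs <;> simp [conjTranspose_apply]

lemma mul_Bm (d : Matrix (Fin k) (Fin k) ℂ) (P : Matrix (Fin k) (Fin r) ℂ)
    (z₁ z₂ z₃ : Matrix (Fin k) (Fin k) ℂ) :
    d * Bm P z₁ z₂ z₃ = Bm (d * P) (d * z₁) (d * z₂) (d * z₃) := by
  ext i j
  by_cases h : (j : ℕ) < r
  · rw [show j = ⟨(j:ℕ), by omega⟩ from rfl]  -- noop
    simp only [Matrix.mul_apply, Bm, Matrix.of_apply, dif_pos h]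
  · by_cases h1 : (j : ℕ) < r + k
    · simp only [Matrix.mul_apply, Bm, Matrix.of_apply, dif_neg h, dif_pos h1]
    · by_cases h2 : (j : ℕ) < r + 2 * k
      · simp only [Matrix.mul_apply, Bm, Matrix.of_apply, dif_neg h, dif_neg h1, dif_pos h2]
      · simp only [Matrix.mul_apply, Bm, Matrix.of_apply, dif_neg h, dif_neg h1, dif_neg h2]

lemma Cm_mulVec (Q : Matrix (Fin r) (Fin k) ℂ) (w₁ w₂ w₃ : Matrix (Fin k) (Fin k) ℂ)
    (u : Fin k → ℂ) :
    Cm Q w₁ w₂ w₃ *ᵥ u = Vm (Q *ᵥ u) (w₁ *ᵥ u) (w₂ *ᵥ u) (w₃ *ᵥ u) := by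
  funext j
  by_cases h : (j : ℕ) < r
  · simp only [Matrix.mulVec, dotProduct, Cm, Vm, Matrix.of_apply, dif_pos h]
  · by_cases h1 : (j : ℕ) < r + k
    · simp only [Matrix.mulVec, dotProduct, Cm, Vm, Matrix.of_apply, dif_neg h, dif_pos h1]
    · by_cases h2 : (j : ℕ) < r + 2 * k
      · simp only [Matrix.mulVec, dotProduct, Cm, Vm, Matrix.of_apply, dif_neg h, dif_neg h1,
          dif_pos h2]
      · simp only [Matrix.mulVec, dotProduct, Cm, Vm, Matrix.of_apply, dif_neg h, dif_neg h1,
          dif_neg h2]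

lemma Bm_mulVec_Vm (P : Matrix (Fin k) (Fin r) ℂ) (z₁ z₂ z₃ : Matrix (Fin k) (Fin k) ℂ)
    (v₀ : Fin r → ℂ) (v₁ v₂ v₃ : Fin k → ℂ) :
    Bm P z₁ z₂ z₃ *ᵥ Vm v₀ v₁ v₂ v₃ = P *ᵥ v₀ + z₁ *ᵥ v₁ + z₂ *ᵥ v₂ + z₃ *ᵥ v₃ := by
  funext i
  rw [Matrix.mulVec, dotProduct,
    sum4 (fun j => Bm P z₁ z₂ z₃ i j * Vm v₀ v₁ v₂ v₃ j)]
  simp [Matrix.mulVec, dotProduct]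

lemma Vm_eq (v : Fin (r + 3 * k) → ℂ) :
    v = Vm (fun j => v ⟨j, by omega⟩) (fun j => v ⟨r + j, by omega⟩)
      (fun j => v ⟨r + k + j, by omega⟩) (fun j => v ⟨r + 2 * k + (j : ℕ), by omega⟩) := by
  funext j
  simp only [Vm]
  split_ifs with h h1 h2 <;> congr 1 <;> exact Fin.ext (by simp; omega)

@[simp] lemma Vm_zero : (Vm 0 0 0 0 : Fin (r + 3 * k) → ℂ) = 0 := by
  funext j
  simp only [Vm]
  split_ifs <;> rfl

lemma Vm_blocks_zero (h : Vm v₀ v₁ v₂ v₃ = 0) :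
    v₀ = 0 ∧ v₁ = 0 ∧ v₂ = 0 ∧ v₃ = 0 := by
  refine ⟨funext fun j => ?_, funext fun j => ?_, funext fun j => ?_, funext fun j => ?_⟩
  · have := congrFun h ⟨j, by omega⟩; simpa using this
  · have := congrFun h ⟨r + j, by omega⟩; simpa using this
  · have := congrFun h ⟨r + k + j, by omega⟩; simpa using this
  · have := congrFun h ⟨r + 2 * k + (j : ℕ), by omega⟩; simpa using this


lemma extendCols_eq (b : Matrix (Fin k) (Fin r) ℂ) :
    extendCols (3 * k) b = Bm b 0 0 0 := by
  ext i j
  simp only [extendCols, Bm, Matrix.of_apply]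
  split_ifs <;> simp

lemma extendRows_eq (c : Matrix (Fin r) (Fin k) ℂ) :
    extendRows (3 * k) c = Cm c 0 0 0 := by
  ext j i
  simp only [extendRows, Cm, Matrix.of_apply]
  split_ifs <;> simp

lemma range_Bm (b : Matrix (Fin k) (Fin r) ℂ) :
    LinearMap.range (Bm b 0 0 0).mulVecLin = LinearMap.range b.mulVecLin := by
  apply le_antisymm
  · rintro y ⟨v, rfl⟩
    refine ⟨fun j => v ⟨j, by omega⟩, ?_⟩
    rw [Matrix.mulVecLin_apply, Matrix.mulVecLin_apply, Vm_eq v, Bm_mulVec_Vm]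
    simp
  · rintro y ⟨u, rfl⟩
    refine ⟨Vm u 0 0 0, ?_⟩
    rw [Matrix.mulVecLin_apply, Matrix.mulVecLin_apply, Bm_mulVec_Vm]
    simp

lemma ker_Cm (c : Matrix (Fin r) (Fin k) ℂ) :
    LinearMap.ker (Cm c 0 0 0).mulVecLin = LinearMap.ker c.mulVecLin := by
  ext u
  simp only [LinearMap.mem_ker, Matrix.mulVecLin_apply, Cm_mulVec]
  constructor
  · intro h
    simpa using (Vm_blocks_zero h).1
  · intro h
    rw [h]
    simp

lemma nondeg_ext {p : ConfP2 k r} (hp : P2NonDeg p) : P2NonDeg (extP2 (3 * k) p) := by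
  obtain ⟨h1, h2⟩ := hp
  constructor
  · rintro ⟨V₀, V₁, hne, hdim, hr, hd, ha1, ha2⟩
    refine h1 ⟨V₀, V₁, hne, hdim, ?_, hd, ha1, ha2⟩
    rwa [show (extP2 (3 * k) p).2.2.2.1 = Bm p.2.2.2.1 0 0 0 from extendCols_eq _,
      range_Bm] at hr
  · rintro ⟨V₀, V₁, hne, hdim, hk, hd, ha1, ha2⟩
    refine h2 ⟨V₀, V₁, hne, hdim, ?_, hd, ha1, ha2⟩
    rwa [show (extP2 (3 * k) p).2.2.2.2 = Cm p.2.2.2.2 0 0 0 from extendRows_eq _,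
      ker_Cm] at hk


set_option maxHeartbeats 1000000 in
lemma adhmD {ζ : ℝ} (hζ : ζ < 1) (a₁ a₂ d : Matrix (Fin k) (Fin k) ℂ)
    (b : Matrix (Fin k) (Fin r) ℂ) (c : Matrix (Fin r) (Fin k) ℂ) (f g u : ℝ)
    (hfg : f ^ 2 + g ^ 2 = 1)
    (hcase : f = 0 ∨ (u = 1 ∧ IsP2ADHM ζ (a₁, a₂, d, b, c))) :
    IsP2ADHM ζ (((f : ℂ) • a₁, (f : ℂ) • a₂, (u : ℂ) • d,
      Bm ((f : ℂ) • b) 0 0 ((g : ℂ) • 1),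
      Cm ((f : ℂ) • c) ((((g * u : ℝ)) : ℂ) • dᴴ)
        ((((g * Real.sqrt (1 - ζ) : ℝ)) : ℂ) • 1) 0) : ConfP2 k (r + 3 * k)) := by
  have hfgC : (f : ℂ) ^ 2 + (g : ℂ) ^ 2 = 1 := by exact_mod_cast hfg
  have hsqC : ((Real.sqrt (1 - ζ) : ℝ) : ℂ) ^ 2 = 1 - (ζ : ℂ) := by
    have : (Real.sqrt (1 - ζ)) ^ 2 = 1 - ζ := Real.sq_sqrt (by linarith)
    exact_mod_cast congrArg (fun x : ℝ => (x : ℂ)) this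
  refine ⟨?_, ?_, ?_⟩
  · -- E1
    show ((f : ℂ) • a₁) * ((u : ℂ) • d) * ((f : ℂ) • a₂)
        - ((f : ℂ) • a₂) * ((u : ℂ) • d) * ((f : ℂ) • a₁)
        + Bm ((f : ℂ) • b) 0 0 ((g : ℂ) • 1) *
          Cm ((f : ℂ) • c) ((((g * u : ℝ)) : ℂ) • dᴴ)
            ((((g * Real.sqrt (1 - ζ) : ℝ)) : ℂ) • 1) 0 = 0
    rw [Bm_mul_Cm]
    rcases hcase with hf | ⟨hu, hp⟩
    · subst hf; push_cast; simp
    · subst hu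
      push_cast
      have key : a₁ * d * a₂ - a₂ * d * a₁ + b * c = 0 := hp.1
      simp only [one_smul, smul_mul_assoc, mul_smul_comm, smul_smul, Matrix.smul_mul,
        Matrix.mul_smul, smul_zero, Matrix.zero_mul, Matrix.mul_zero, add_zero, zero_add]
      calc ((f:ℂ) * (f:ℂ)) • (a₁ * d * a₂) - ((f:ℂ) * (f:ℂ)) • (a₂ * d * a₁) + ((f:ℂ) * (f:ℂ)) • (b * c)
          = ((f : ℂ) * f) • (a₁ * d * a₂ - a₂ * d * a₁ + b * c) := by module
        _ = 0 := by rw [key, smul_zero]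
  · -- E2
    show ((f : ℂ) • a₁) * ((f : ℂ) • a₁)ᴴ + ((f : ℂ) • a₂) * ((f : ℂ) • a₂)ᴴ
        + Bm ((f : ℂ) • b) 0 0 ((g : ℂ) • 1) * (Bm ((f : ℂ) • b) 0 0 ((g : ℂ) • 1))ᴴ = 1
    rw [Bm_ct, Bm_mul_Cm]
    simp only [conjTranspose_zero, conjTranspose_smul, conjTranspose_one, Complex.star_def,
      Complex.conj_ofReal, Matrix.smul_mul, Matrix.mul_smul, smul_smul, Matrix.zero_mul,
      Matrix.mul_zero, add_zero, zero_add, mul_one]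
    rcases hcase with hf | ⟨hu, hp⟩
    · subst hf
      have h2 : (g : ℝ) * g = 1 := by nlinarith [hfg]
      have hg2 : (g : ℂ) * g = 1 := by exact_mod_cast h2
      push_cast
      simp only [zero_smul, Matrix.zero_mul, Matrix.mul_zero, smul_zero, zero_add, add_zero,
        zero_mul, mul_zero]
      rw [hg2, one_smul]
    · have key : a₁ * a₁ᴴ + a₂ * a₂ᴴ + b * bᴴ = 1 := hp.2.1
      calc ((f:ℂ) * (f:ℂ)) • (a₁ * a₁ᴴ) + ((f:ℂ) * (f:ℂ)) • (a₂ * a₂ᴴ)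
            + (((f:ℂ) * (f:ℂ)) • (b * bᴴ) + ((g:ℂ) * (g:ℂ)) • 1)
          = ((f:ℂ) * (f:ℂ)) • (a₁ * a₁ᴴ + a₂ * a₂ᴴ + b * bᴴ) + ((g:ℂ) * (g:ℂ)) • 1 := by
            module
        _ = 1 := by rw [key]; match_scalars; linear_combination hfgC
  · -- E3
    set B := Bm ((f : ℂ) • b) 0 0 ((g : ℂ) • 1) with hB
    set C := Cm ((f : ℂ) • c) ((((g * u : ℝ)) : ℂ) • dᴴ)
        ((((g * Real.sqrt (1 - ζ) : ℝ)) : ℂ) • 1) 0 with hC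
    show ((u : ℂ) • d) * ((f : ℂ) • a₁) * (((u : ℂ) • d) * ((f : ℂ) • a₁))ᴴ
        - (((u : ℂ) • d) * ((f : ℂ) • a₁))ᴴ * (((u : ℂ) • d) * ((f : ℂ) • a₁))
        + ((u : ℂ) • d) * ((f : ℂ) • a₂) * (((u : ℂ) • d) * ((f : ℂ) • a₂))ᴴ
        - (((u : ℂ) • d) * ((f : ℂ) • a₂))ᴴ * (((u : ℂ) • d) * ((f : ℂ) • a₂))
        - ((f : ℂ) • a₁)ᴴ * ((f : ℂ) • a₁) - ((f : ℂ) • a₂)ᴴ * ((f : ℂ) • a₂)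
        + ((u : ℂ) • d) * B * (((u : ℂ) • d) * B)ᴴ - Cᴴ * C + 1
        = (ζ : ℂ) • 1
    have hT7 : ((u : ℂ) • d) * B * (((u : ℂ) • d) * B)ᴴ
        = ((u : ℂ) • d) * (B * Bᴴ) * ((u : ℂ) • d)ᴴ := by
      rw [conjTranspose_mul, Matrix.mul_assoc, Matrix.mul_assoc, Matrix.mul_assoc]
    have hBBH : B * Bᴴ = ((f:ℂ) * (f:ℂ)) • (b * bᴴ) + ((g:ℂ) * (g:ℂ)) • 1 := by
      rw [hB, Bm_ct, Bm_mul_Cm]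
      simp only [conjTranspose_zero, conjTranspose_smul, conjTranspose_one, Complex.star_def,
        Complex.conj_ofReal, Matrix.smul_mul, Matrix.mul_smul, smul_smul, Matrix.zero_mul,
        Matrix.mul_zero, add_zero, zero_add, mul_one]
    have hCHC : Cᴴ * C = ((f:ℂ) * (f:ℂ)) • (cᴴ * c)
        + ((((g * u : ℝ)) : ℂ) * (((g * u : ℝ)) : ℂ)) • (d * dᴴ)
        + ((((g * Real.sqrt (1 - ζ) : ℝ)) : ℂ) * (((g * Real.sqrt (1 - ζ) : ℝ)) : ℂ)) • 1 := by
      rw [hC, Cm_ct, Bm_mul_Cm]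
      simp only [conjTranspose_zero, conjTranspose_smul, conjTranspose_one, Complex.star_def,
        Complex.conj_ofReal, conjTranspose_conjTranspose, Matrix.smul_mul, Matrix.mul_smul,
        smul_smul, Matrix.zero_mul, Matrix.mul_zero, add_zero, zero_add, mul_one]
    rw [hT7, hBBH, hCHC]
    rcases hcase with hf | ⟨hu, hp⟩
    · subst hf
      have h2 : (g : ℝ) * g = 1 := by nlinarith [hfg]
      have hg2 : (g : ℂ) * g = 1 := by exact_mod_cast h2
      push_cast
      simp only [zero_smul, Matrix.zero_mul, Matrix.mul_zero, smul_zero, zero_add, add_zero,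
        zero_mul, mul_zero, zero_sub, sub_zero, neg_zero, conjTranspose_zero,
        Matrix.mul_smul, Matrix.smul_mul, smul_smul, Matrix.mul_one, mul_one,
        conjTranspose_smul, Complex.star_def, Complex.conj_ofReal, Matrix.mul_assoc]
      match_scalars
      · ring
      · linear_combination ((ζ:ℂ) - 1) * hg2 + (-((g:ℂ) * (g:ℂ))) * hsqC
    · subst hu
      have key : d * a₁ * (d * a₁)ᴴ - (d * a₁)ᴴ * (d * a₁)
          + d * a₂ * (d * a₂)ᴴ - (d * a₂)ᴴ * (d * a₂)
          - a₁ᴴ * a₁ - a₂ᴴ * a₂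
          + d * b * (d * b)ᴴ - cᴴ * c + 1 = (ζ : ℂ) • 1 := hp.2.2
      push_cast
      simp only [one_smul, conjTranspose_smul, conjTranspose_mul, Complex.star_def,
        Complex.conj_ofReal, Matrix.smul_mul, Matrix.mul_smul, smul_smul, Matrix.mul_add,
        Matrix.add_mul, Matrix.mul_one, mul_one, Matrix.mul_assoc] at key ⊢
      have key' : cᴴ * c = d * (a₁ * (a₁ᴴ * dᴴ)) - a₁ᴴ * (dᴴ * (d * a₁))
          + d * (a₂ * (a₂ᴴ * dᴴ)) - a₂ᴴ * (dᴴ * (d * a₂)) - a₁ᴴ * a₁ - a₂ᴴ * a₂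
          + d * (b * (bᴴ * dᴴ)) + 1 - (ζ : ℂ) • 1 := by rw [← key]; abel
      rw [key']
      match_scalars
      all_goals try ring
      all_goals linear_combination ((ζ:ℂ) - 1) * hfgC + (-((g:ℂ) ^ 2)) * hsqC

lemma nondegD {ζ : ℝ} (hζ : ζ < 1) (a₁ a₂ d : Matrix (Fin k) (Fin k) ℂ)
    (b : Matrix (Fin k) (Fin r) ℂ) (c : Matrix (Fin r) (Fin k) ℂ) (f g u : ℝ) (hg : g ≠ 0) :
    P2NonDeg (((f : ℂ) • a₁, (f : ℂ) • a₂, (u : ℂ) • d,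
      Bm ((f : ℂ) • b) 0 0 ((g : ℂ) • 1),
      Cm ((f : ℂ) • c) ((((g * u : ℝ)) : ℂ) • dᴴ)
        ((((g * Real.sqrt (1 - ζ) : ℝ)) : ℂ) • 1) 0) : ConfP2 k (r + 3 * k)) := by
  have hgC : (g : ℂ) ≠ 0 := by exact_mod_cast hg
  constructor
  · rintro ⟨V₀, V₁, hne, -, hr, -, -, -⟩
    apply hne
    rw [eq_top_iff]
    intro y _
    apply hr
    refine ⟨Vm 0 0 0 (((g : ℂ))⁻¹ • y), ?_⟩
    show Bm ((f : ℂ) • b) 0 0 ((g : ℂ) • 1) *ᵥ _ = y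
    rw [Bm_mulVec_Vm]
    simp only [Matrix.mulVec_zero, Matrix.zero_mulVec, zero_add, add_zero,
      Matrix.smul_mulVec, Matrix.mulVec_smul, Matrix.one_mulVec, smul_smul]
    rw [inv_mul_cancel₀ hgC, one_smul]
  · rintro ⟨V₀, V₁, hne, -, hk, -, -, -⟩
    apply hne
    rw [eq_bot_iff]
    intro v hv
    have h0 := hk hv
    rw [LinearMap.mem_ker, Matrix.mulVecLin_apply] at h0
    rw [show (((f : ℂ) • a₁, (f : ℂ) • a₂, (u : ℂ) • d,
      Bm ((f : ℂ) • b) 0 0 ((g : ℂ) • 1),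
      Cm ((f : ℂ) • c) ((((g * u : ℝ)) : ℂ) • dᴴ)
        ((((g * Real.sqrt (1 - ζ) : ℝ)) : ℂ) • 1) 0) : ConfP2 k (r + 3 * k)).2.2.2.2
      = Cm ((f : ℂ) • c) ((((g * u : ℝ)) : ℂ) • dᴴ)
        ((((g * Real.sqrt (1 - ζ) : ℝ)) : ℂ) • 1) 0 from rfl, Cm_mulVec] at h0
    have h2 := (Vm_blocks_zero h0).2.2.1
    have hcoef : ((g * Real.sqrt (1 - ζ) : ℝ) : ℂ) ≠ 0 := by
      have hs : Real.sqrt (1 - ζ) ≠ 0 :=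
        ne_of_gt (Real.sqrt_pos.mpr (by linarith))
      exact_mod_cast mul_ne_zero hg hs
    rw [Matrix.smul_mulVec, Matrix.one_mulVec, smul_eq_zero] at h2
    rcases h2 with h2 | h2
    · exact absurd h2 hcoef
    · simp [h2]


/-- The deformation family. -/
noncomputable def Dm (ζ : ℝ) (p : ConfP2 k r) (f g u : ℝ) : ConfP2 k (r + 3 * k) :=
  ((f : ℂ) • p.1, (f : ℂ) • p.2.1, (u : ℂ) • p.2.2.1,
   Bm ((f : ℂ) • p.2.2.2.1) 0 0 ((g : ℂ) • 1),
   Cm ((f : ℂ) • p.2.2.2.2) ((((g * u : ℝ)) : ℂ) • p.2.2.1ᴴ)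
     ((((g * Real.sqrt (1 - ζ) : ℝ)) : ℂ) • 1) 0)

lemma Dm_adhm {ζ : ℝ} (hζ : ζ < 1) (p : ConfP2 k r) (f g u : ℝ)
    (hfg : f ^ 2 + g ^ 2 = 1) (hcase : f = 0 ∨ (u = 1 ∧ IsP2ADHM ζ p)) :
    IsP2ADHM ζ (Dm ζ p f g u) :=
  adhmD hζ p.1 p.2.1 p.2.2.1 p.2.2.2.1 p.2.2.2.2 f g u hfg hcase

lemma Dm_nondeg {ζ : ℝ} (hζ : ζ < 1) (p : ConfP2 k r) (f g u : ℝ) (hg : g ≠ 0) :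
    P2NonDeg (Dm ζ p f g u) :=
  nondegD hζ p.1 p.2.1 p.2.2.1 p.2.2.2.1 p.2.2.2.2 f g u hg

lemma Dm_one (ζ : ℝ) (p : ConfP2 k r) : Dm ζ p 1 0 1 = extP2 (3 * k) p := by
  simp only [Dm, extP2, extendCols_eq, extendRows_eq]
  push_cast
  simp

lemma adhm_ext {ζ : ℝ} (hζ : ζ < 1) {p : ConfP2 k r} (hp : IsP2ADHM ζ p) :
    IsP2ADHM ζ (extP2 (3 * k) p) :=
  Dm_one ζ p ▸ Dm_adhm hζ p 1 0 1 (by norm_num) (Or.inr ⟨rfl, hp⟩)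

lemma continuous_Bm {X : Type*} [TopologicalSpace X] {P : X → Matrix (Fin k) (Fin r) ℂ}
    {z₁ z₂ z₃ : X → Matrix (Fin k) (Fin k) ℂ} (hP : Continuous P) (h1 : Continuous z₁)
    (h2 : Continuous z₂) (h3 : Continuous z₃) :
    Continuous fun x => Bm (P x) (z₁ x) (z₂ x) (z₃ x) := by
  apply continuous_matrix
  intro i j
  simp only [Bm, Matrix.of_apply]
  split_ifs <;> [exact hP.matrix_elem _ _; exact h1.matrix_elem _ _;
    exact h2.matrix_elem _ _; exact h3.matrix_elem _ _]

lemma continuous_Cm {X : Type*} [TopologicalSpace X] {Q : X → Matrix (Fin r) (Fin k) ℂ}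
    {w₁ w₂ w₃ : X → Matrix (Fin k) (Fin k) ℂ} (hQ : Continuous Q) (h1 : Continuous w₁)
    (h2 : Continuous w₂) (h3 : Continuous w₃) :
    Continuous fun x => Cm (Q x) (w₁ x) (w₂ x) (w₃ x) := by
  apply continuous_matrix
  intro j i
  simp only [Cm, Matrix.of_apply]
  split_ifs <;> [exact hQ.matrix_elem _ _; exact h1.matrix_elem _ _;
    exact h2.matrix_elem _ _; exact h3.matrix_elem _ _]

lemma continuous_Dm {X : Type*} [TopologicalSpace X] (ζ : ℝ) {p : X → ConfP2 k r}
    {f g u : X → ℝ} (hp : Continuous p) (hf : Continuous f) (hg : Continuous g)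
    (hu : Continuous u) :
    Continuous fun x => Dm ζ (p x) (f x) (g x) (u x) := by
  have hfC : Continuous fun x => ((f x : ℝ) : ℂ) := Complex.continuous_ofReal.comp hf
  have hgC : Continuous fun x => ((g x : ℝ) : ℂ) := Complex.continuous_ofReal.comp hg
  have huC : Continuous fun x => ((u x : ℝ) : ℂ) := Complex.continuous_ofReal.comp hu
  have hguC : Continuous fun x => (((g x * u x : ℝ)) : ℂ) :=
    Complex.continuous_ofReal.comp (hg.mul hu)
  have hgsC : Continuous fun x => (((g x * Real.sqrt (1 - ζ) : ℝ)) : ℂ) :=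
    Complex.continuous_ofReal.comp (hg.mul continuous_const)
  have h1 : Continuous fun x => (p x).1 := continuous_fst.comp hp
  have h2 : Continuous fun x => (p x).2.1 := continuous_fst.comp (continuous_snd.comp hp)
  have h3 : Continuous fun x => (p x).2.2.1 :=
    continuous_fst.comp (continuous_snd.comp (continuous_snd.comp hp))
  have h4 : Continuous fun x => (p x).2.2.2.1 :=
    continuous_fst.comp (continuous_snd.comp (continuous_snd.comp (continuous_snd.comp hp)))
  have h5 : Continuous fun x => (p x).2.2.2.2 :=
    continuous_snd.comp (continuous_snd.comp (continuous_snd.comp (continuous_snd.comp hp)))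
  refine Continuous.prodMk (hfC.smul h1) (Continuous.prodMk (hfC.smul h2)
    (Continuous.prodMk (huC.smul h3) (Continuous.prodMk ?_ ?_)))
  · exact continuous_Bm (hfC.smul h4) continuous_const continuous_const
      (hgC.smul continuous_const)
  · exact continuous_Cm (hfC.smul h5) (hguC.smul h3.matrix_conjTranspose)
      (hgsC.smul continuous_const) continuous_const


end St16

open St16

/-- For `|ζ| < 1`, the inclusion `E_k^r(ζ) → E_k^{r+3k}(ζ)`,
`(a₁,a₂,d,b,c) ↦ (a₁,a₂,d,(b 0 0 0),(c;0;0;0))`, of the spaces of P²-ADHM data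
at level `ζ` satisfying the non-degeneracy conditions C1' and C2' is a
well-defined continuous map and is null-homotopic. -/
theorem stmt16 (k r : ℕ) (ζ : ℝ) (hζ : |ζ| < 1) :
    ∃ f : C({p : ConfP2 k r // IsP2ADHM ζ p ∧ P2NonDeg p},
            {p : ConfP2 k (r + 3 * k) // IsP2ADHM ζ p ∧ P2NonDeg p}),
      (∀ p, (f p : ConfP2 k (r + 3 * k)) = extP2 (3 * k) (p : ConfP2 k r)) ∧
      ∃ q, f.Homotopic (ContinuousMap.const _ q) := by
  have hζ1 : ζ < 1 := (abs_lt.mp hζ).2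
  set X := {p : ConfP2 k r // IsP2ADHM ζ p ∧ P2NonDeg p}
  set Y := {p : ConfP2 k (r + 3 * k) // IsP2ADHM ζ p ∧ P2NonDeg p}
  -- the two families
  set F : ℝ → ConfP2 k r → ConfP2 k (r + 3 * k) := fun t p =>
    Dm ζ p (Real.cos (Real.pi / 2 * t)) (Real.sin (Real.pi / 2 * t)) 1 with hF
  set G : ℝ → ConfP2 k r → ConfP2 k (r + 3 * k) := fun t p => Dm ζ p 0 1 (1 - t) with hG
  have hF0 : ∀ p : ConfP2 k r, F 0 p = extP2 (3 * k) p := by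
    intro p
    rw [hF]
    simp only [mul_zero, Real.cos_zero, Real.sin_zero]
    exact Dm_one ζ p
  have hF1 : ∀ p : ConfP2 k r, F 1 p = G 0 p := by
    intro p
    rw [hF, hG]
    simp only [mul_one, Real.cos_pi_div_two, Real.sin_pi_div_two, sub_zero]
  have hFadhm : ∀ (t : ℝ) (p : ConfP2 k r), IsP2ADHM ζ p → IsP2ADHM ζ (F t p) :=
    fun t p hp => Dm_adhm hζ1 p _ _ _ (Real.cos_sq_add_sin_sq _) (Or.inr ⟨rfl, hp⟩)
  have hFnd : ∀ (t : ℝ) (p : ConfP2 k r), 0 < t → t ≤ 1 → P2NonDeg (F t p) := by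
    intro t p h0 h1
    apply Dm_nondeg hζ1
    have hπ : 0 < Real.pi / 2 := by positivity
    apply ne_of_gt
    apply Real.sin_pos_of_pos_of_lt_pi
    · positivity
    · calc Real.pi / 2 * t ≤ Real.pi / 2 * 1 := by nlinarith
        _ < Real.pi := by linarith [Real.pi_pos]
  have hGmem : ∀ (t : ℝ) (p : ConfP2 k r), IsP2ADHM ζ (G t p) ∧ P2NonDeg (G t p) :=
    fun t p => ⟨Dm_adhm hζ1 p _ _ _ (by norm_num) (Or.inl rfl),
      Dm_nondeg hζ1 p _ _ _ one_ne_zero⟩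
  have hG1 : ∀ p p' : ConfP2 k r, G 1 p = G 1 p' := by
    intro p p'
    rw [hG]
    simp only [sub_self, mul_zero, Dm, Complex.ofReal_zero, Complex.ofReal_one, zero_smul,
      one_smul, mul_one, Complex.ofReal_mul]
  -- the continuous inclusion
  have hcont_ext : Continuous fun x : X => extP2 (3 * k) x.1 := by
    have : (fun x : X => extP2 (3 * k) x.1) = fun x : X => F 0 x.1 := by
      funext x; rw [hF0]
    rw [this]
    exact continuous_Dm ζ (continuous_subtype_val) continuous_const continuous_const
      continuous_const
  set ι : C(X, Y) := ⟨fun x => ⟨extP2 (3 * k) x.1, adhm_ext hζ1 x.2.1, nondeg_ext x.2.2⟩,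
    hcont_ext.subtype_mk _⟩ with hι
  set mid : C(X, Y) := ⟨fun x => ⟨G 0 x.1, hGmem 0 x.1⟩,
    ((continuous_Dm ζ (continuous_subtype_val) continuous_const continuous_const
      continuous_const).subtype_mk _)⟩ with hmid
  set p₀ : ConfP2 k r := (0, 0, 0, 0, 0) with hp₀
  set q : Y := ⟨G 1 p₀, hGmem 1 p₀⟩ with hq
  have H₁ : ContinuousMap.Homotopy ι mid := by
    refine ⟨⟨fun z => ⟨F z.1.1 z.2.1, hFadhm _ _ z.2.2.1, ?_⟩, ?_⟩, ?_, ?_⟩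
    · rcases eq_or_ne z.1 0 with h | h
      · rw [h]
        show P2NonDeg (F ((0 : unitInterval) : ℝ) z.2.1)
        rw [show ((0 : unitInterval) : ℝ) = (0 : ℝ) from rfl, hF0]
        exact nondeg_ext z.2.2.2
      · exact hFnd _ _ (lt_of_le_of_ne z.1.2.1 (fun hc => h (Subtype.ext hc.symm))) z.1.2.2
    · apply Continuous.subtype_mk
      exact continuous_Dm ζ (continuous_subtype_val.comp continuous_snd)
        (Real.continuous_cos.comp (continuous_const.mul
          (continuous_subtype_val.comp continuous_fst)))
        (Real.continuous_sin.comp (continuous_const.mul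
          (continuous_subtype_val.comp continuous_fst)))
        continuous_const
    · intro x
      exact Subtype.ext (hF0 x.1)
    · intro x
      exact Subtype.ext (hF1 x.1)
  have H₂ : ContinuousMap.Homotopy mid (ContinuousMap.const X q) := by
    refine ⟨⟨fun z => ⟨G z.1.1 z.2.1, hGmem _ _⟩, ?_⟩, ?_, ?_⟩
    · apply Continuous.subtype_mk
      exact continuous_Dm ζ (continuous_subtype_val.comp continuous_snd)
        continuous_const continuous_const
        (continuous_const.sub (continuous_subtype_val.comp continuous_fst))
    · intro x
      exact Subtype.ext rfl
    · intro x
      exact Subtype.ext (hG1 x.1 p₀)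
  exact ⟨ι, fun p => rfl, ⟨q, ⟨H₁.trans H₂⟩⟩⟩
end
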